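/- Let K be a finite-dimensional 𝔽_q-vector space of dimension b and H ⊆ K a subspace of dimension a. For any integer c with b − a ≤ c ≤ b, the number of subspaces G ⊆ K with dim G = c and G + H = K equals q^{(b−c)c} · (q⁻¹)_a / ( (q⁻¹)_{b−c} (q⁻¹)_{a+c−b} ). -/

import Mathlib

/-- The Pochhammer symbol `(q⁻¹)_m = ∏_{i=1}^m (1 - q^{-i})`. -/
noncomputable def qPoch (q : ℚ) (m : ℕ) : ℚ :=
  ∏ i ∈ Finset.range m, (1 - q⁻¹ ^ (i + 1))

open Module Submodule Finset

namespace Statement7Aux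

def Pk (q n k : ℕ) : ℕ := ∏ i ∈ Finset.range k, (q ^ n - q ^ i)

lemma card_fiber_eq {X Y : Type*} [Finite X] [Finite Y] (f : X → Y) (m : ℕ)
    (h : ∀ y, Nat.card {x // f x = y} = m) : Nat.card X = Nat.card Y * m := by
  classical
  cases nonempty_fintype X
  cases nonempty_fintype Y
  rw [Nat.card_eq_fintype_card, Nat.card_eq_fintype_card,
    ← Fintype.card_congr (Equiv.sigmaFiberEquiv f), Fintype.card_sigma]
  have h' : ∀ y : Y, Fintype.card {x // f x = y} = m := by
    intro y; rw [← Nat.card_eq_fintype_card]; exact h y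
  simp [h', Finset.sum_const, mul_comm]

section Counting

variable (F : Type*) [Field F] [Fintype F] {V : Type*} [AddCommGroup V] [Module F V]
  [FiniteDimensional F V]

lemma natCard_module : Nat.card V = Fintype.card F ^ finrank F V := by
  haveI : Finite V := Module.finite_of_finite F
  cases nonempty_fintype V
  rw [Nat.card_eq_fintype_card, card_eq_pow_finrank (K := F)]

lemma natCard_compl_span {k : ℕ} (w : Fin k → V) (hw : LinearIndependent F w) :
    Nat.card {x : V // x ∉ span F (Set.range w)} =
      Fintype.card F ^ finrank F V - Fintype.card F ^ k := by
  haveI : Finite V := Module.finite_of_finite F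
  classical
  cases nonempty_fintype V
  rw [Nat.card_eq_fintype_card]
  have h1 : Fintype.card {x : V // ¬ x ∈ span F (Set.range w)} =
      Fintype.card V - Fintype.card {x : V // x ∈ span F (Set.range w)} :=
    Fintype.card_subtype_compl _
  rw [h1]
  have h2 : Fintype.card {x : V // x ∈ span F (Set.range w)} =
      Fintype.card F ^ k := by
    rw [← Nat.card_eq_fintype_card]
    have := natCard_module F (V := span F (Set.range w))
    rw [this, finrank_span_eq_card hw, Fintype.card_fin]
  rw [h2, ← Nat.card_eq_fintype_card, natCard_module F (V := V)]

lemma card_li (k : ℕ) :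
    Nat.card {v : Fin k → V // LinearIndependent F v}
      = Pk (Fintype.card F) (finrank F V) k := by
  haveI : Finite V := Module.finite_of_finite F
  induction k with
  | zero =>
      rw [Pk, Finset.range_zero, Finset.prod_empty]
      have e : {v : Fin 0 → V // LinearIndependent F v} ≃ PUnit.{1} :=
        ⟨fun _ => PUnit.unit, fun _ => ⟨fun i => i.elim0, linearIndependent_empty_type⟩,
          fun x => Subtype.ext (Subsingleton.elim _ _), fun _ => rfl⟩
      rw [Nat.card_congr e, Nat.card_unique]
  | succ k ih =>
      rw [Pk, Finset.prod_range_succ, ← Pk, ← ih]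
      have htail : ∀ v : {v : Fin (k+1) → V // LinearIndependent F v},
          LinearIndependent F (Fin.tail v.1) := by
        intro v
        have h := v.2
        rw [← Fin.cons_self_tail v.1] at h
        exact (linearIndependent_fin_cons.mp h).1
      apply card_fiber_eq (f := fun v : {v : Fin (k+1) → V // LinearIndependent F v} =>
        (⟨Fin.tail v.1, htail v⟩ : {w : Fin k → V // LinearIndependent F w}))
      intro w
      have e : {v : {v : Fin (k+1) → V // LinearIndependent F v} //
          (⟨Fin.tail v.1, htail v⟩ : {w : Fin k → V // LinearIndependent F w}) = w} ≃
          {x : V // x ∉ span F (Set.range w.1)} :=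
        { toFun := fun v => ⟨v.1.1 0, by
            have h := v.1.2
            rw [← Fin.cons_self_tail v.1.1] at h
            have h2 := (linearIndependent_fin_cons.mp h).2
            have h3 : Fin.tail v.1.1 = w.1 := congrArg Subtype.val v.2
            rwa [h3] at h2⟩
          invFun := fun x => ⟨⟨Fin.cons x.1 w.1,
              linearIndependent_fin_cons.mpr ⟨w.2, x.2⟩⟩,
            by apply Subtype.ext; simp [Fin.tail_cons]⟩
          left_inv := fun v => by
            apply Subtype.ext; apply Subtype.ext
            have h3 : Fin.tail v.1.1 = w.1 := congrArg Subtype.val v.2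
            show Fin.cons (v.1.1 0) w.1 = v.1.1
            rw [← h3]
            exact Fin.cons_self_tail v.1.1
          right_inv := fun x => by
            apply Subtype.ext
            simp }
      rw [Nat.card_congr e, natCard_compl_span F w.1 w.2]

lemma card_grass (k : ℕ) :
    Nat.card {W : Submodule F V // finrank F ↥W = k} * Pk (Fintype.card F) k k
      = Pk (Fintype.card F) (finrank F V) k := by
  haveI : Finite V := Module.finite_of_finite F
  haveI : Finite (Submodule F V) :=
    Finite.of_injective (fun W : Submodule F V => (W : Set V)) SetLike.coe_injective
  rw [← card_li F k]
  have hf : ∀ v : {v : Fin k → V // LinearIndependent F v},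
      finrank F ↥(span F (Set.range v.1)) = k := by
    intro v; rw [finrank_span_eq_card v.2, Fintype.card_fin]
  rw [card_fiber_eq (f := fun v : {v : Fin k → V // LinearIndependent F v} =>
    (⟨span F (Set.range v.1), hf v⟩ : {W : Submodule F V // finrank F ↥W = k}))
    (Pk (Fintype.card F) k k) ?_]
  intro W
  have e : {v : {v : Fin k → V // LinearIndependent F v} //
      (⟨span F (Set.range v.1), hf v⟩ : {W : Submodule F V // finrank F ↥W = k}) = W} ≃
      {u : Fin k → ↥W.1 // LinearIndependent F u} :=
    { toFun := fun v => ⟨fun i => ⟨v.1.1 i, by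
          have h3 : span F (Set.range v.1.1) = W.1 := congrArg Subtype.val v.2
          rw [← h3]; exact subset_span ⟨i, rfl⟩⟩,
        by
          apply LinearIndependent.of_comp (W.1.subtype)
          exact v.1.2⟩
      invFun := fun u => ⟨⟨fun i => (u.1 i : V), u.2.map' W.1.subtype (ker_subtype _)⟩, by
          apply Subtype.ext
          show span F (Set.range fun i => (W.1.subtype (u.1 i) : V)) = W.1
          have : (Set.range fun i => W.1.subtype (u.1 i)) = W.1.subtype '' Set.range u.1 := by
            rw [← Set.range_comp]; rfl
          rw [this, Submodule.span_image, u.2.span_eq_top_of_card_eq_finrank' (by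
            rw [Fintype.card_fin, W.2]), Submodule.map_top, range_subtype]⟩
      left_inv := fun v => by apply Subtype.ext; apply Subtype.ext; rfl
      right_inv := fun u => by apply Subtype.ext; funext i; apply Subtype.ext; rfl }
  rw [Nat.card_congr e]
  have := card_li F (V := ↥W.1) k
  rwa [W.2] at this

lemma card_complement (W : Submodule F V) :
    Nat.card {C : Submodule F V // IsCompl W C}
      = Fintype.card F ^ ((finrank F V - finrank F ↥W) * finrank F ↥W) := by
  obtain ⟨C0, hC0⟩ := W.exists_isCompl
  set f0 := W.linearProjOfIsCompl C0 hC0 with hf0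
  have e2 : { f : V →ₗ[F] ↥W // ∀ x : ↥W, f x = x } ≃ ((V ⧸ W) →ₗ[F] ↥W) :=
    { toFun := fun f => W.liftQ (f.1 - f0) (by
        intro x hx
        have h1 := f.2 ⟨x, hx⟩
        have h2 := W.linearProjOfIsCompl_apply_left hC0 ⟨x, hx⟩
        simp only [LinearMap.mem_ker, LinearMap.sub_apply]
        rw [show ((⟨x, hx⟩ : ↥W) : V) = x from rfl] at h1 h2
        rw [h1, ← hf0] at *
        rw [show f0 x = ⟨x, hx⟩ from h2, sub_self])
      invFun := fun φ => ⟨f0 + φ.comp W.mkQ, fun x => by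
        have : W.mkQ (x : V) = 0 := by
          rw [Submodule.mkQ_apply, Submodule.Quotient.mk_eq_zero]; exact x.2
        simp [this, W.linearProjOfIsCompl_apply_left hC0 x]
        exact W.linearProjOfIsCompl_apply_left hC0 x⟩
      left_inv := fun f => by
        apply Subtype.ext
        ext x
        simp [Submodule.mkQ_apply, Submodule.liftQ_apply]
      right_inv := fun φ => by
        apply W.quot_hom_ext
        intro x
        rw [Submodule.liftQ_apply]
        simp }
  rw [Nat.card_congr ((W.isComplEquivProj).trans e2), natCard_module F,
    Module.finrank_linearMap]
  congr 2
  have := W.finrank_quotient_add_finrank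
  omega

end Counting

section Main

variable {F : Type*} [Field F] [Fintype F] {V : Type*} [AddCommGroup V] [Module F V]
  [FiniteDimensional F V]

noncomputable def fiberEquiv (H U : Submodule F V) (hU : U ≤ H) (c : ℕ)
    (hc : c + finrank F ↥H = finrank F V + finrank F ↥U) :
    {G : Submodule F V // (finrank F ↥G = c ∧ G ⊔ H = ⊤) ∧ G ⊓ H = U} ≃
      {C : Submodule F (V ⧸ U) // IsCompl (H.map U.mkQ) C} where
  toFun G := ⟨(G.1).map U.mkQ, by
    constructor
    · rw [disjoint_iff]
      refine (Submodule.eq_bot_iff _).mpr ?_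
      rintro x ⟨hxH, hxG⟩
      obtain ⟨h, hh, hhx⟩ := hxH
      obtain ⟨g, hg, hgx⟩ := hxG
      have hgh : g - h ∈ U := by
        rw [← Submodule.Quotient.eq U]
        show U.mkQ g = U.mkQ h
        rw [hgx, hhx]
      have hgH : g ∈ H := by
        have : g - h + h ∈ H := H.add_mem (hU hgh) hh
        simpa using this
      have hgU : g ∈ U := by rw [← G.2.2]; exact ⟨hg, hgH⟩
      rw [← hgx]
      show U.mkQ g = 0
      rw [Submodule.mkQ_apply, Submodule.Quotient.mk_eq_zero]
      exact hgU
    · rw [codisjoint_iff, ← Submodule.map_sup, sup_comm, G.2.1.2, Submodule.map_top,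
        Submodule.range_mkQ]⟩
  invFun C := ⟨C.1.comap U.mkQ, by
    have hinf : C.1.comap U.mkQ ⊓ H = U := by
      ext x
      constructor
      · rintro ⟨hx1, hx2⟩
        have : U.mkQ x ∈ H.map U.mkQ ⊓ C.1 :=
          ⟨Submodule.mem_map_of_mem hx2, hx1⟩
        rw [disjoint_iff.mp C.2.1] at this
        rw [← Submodule.Quotient.mk_eq_zero U, ← Submodule.mkQ_apply]
        exact this
      · intro hx
        refine ⟨?_, hU hx⟩
        show U.mkQ x ∈ C.1
        rw [Submodule.mkQ_apply, (Submodule.Quotient.mk_eq_zero U).mpr hx]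
        exact C.1.zero_mem
    have hsup : C.1.comap U.mkQ ⊔ H = ⊤ := by
      rw [eq_top_iff]
      intro x _
      have hx : U.mkQ x ∈ H.map U.mkQ ⊔ C.1 := by
        rw [codisjoint_iff.mp C.2.2]; trivial
      obtain ⟨hbar, hhb, cbar, hcb, hsum⟩ := Submodule.mem_sup.mp hx
      obtain ⟨h, hh, rfl⟩ := hhb
      refine Submodule.mem_sup.mpr ⟨x - h, ?_, h, hh, by abel⟩
      show U.mkQ (x - h) ∈ C.1
      have : U.mkQ (x - h) = cbar := by
        rw [map_sub, ← hsum]; abel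
      rw [this]; exact hcb
    refine ⟨⟨?_, hsup⟩, hinf⟩
    have h2 := Submodule.finrank_sup_add_finrank_inf_eq (C.1.comap U.mkQ) H
    rw [hsup, hinf, finrank_top] at h2
    omega⟩
  left_inv := fun G => by
    apply Subtype.ext
    show (G.1.map U.mkQ).comap U.mkQ = G.1
    rw [Submodule.comap_map_eq, Submodule.ker_mkQ, sup_eq_left]
    exact le_trans (le_of_eq G.2.2.symm) inf_le_left
  right_inv := fun C => by
    apply Subtype.ext
    exact Submodule.map_comap_eq_of_surjective U.mkQ_surjective C.1

omit [Fintype F] in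
lemma finrank_map_mkQ {U G : Submodule F V} (h : U ≤ G) :
    finrank F ↥(G.map U.mkQ) + finrank F ↥U = finrank F ↥G := by
  have h1 := LinearMap.finrank_range_add_finrank_ker (U.mkQ.comp G.subtype)
  rw [LinearMap.range_comp, Submodule.range_subtype, LinearMap.ker_comp, Submodule.ker_mkQ,
    (Submodule.comapSubtypeEquivOfLe h).finrank_eq] at h1
  omega

lemma main_count (H : Submodule F V) (a b c : ℕ)
    (hb : finrank F V = b) (ha : finrank F ↥H = a)
    (hc1 : b - a ≤ c) (hc2 : c ≤ b) :
    Nat.card {G : Submodule F V // finrank F ↥G = c ∧ G ⊔ H = ⊤}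
        * Pk (Fintype.card F) (a + c - b) (a + c - b)
      = Pk (Fintype.card F) a (a + c - b) * Fintype.card F ^ ((b - a) * (b - c)) := by
  haveI : Finite V := Module.finite_of_finite F
  haveI : Finite (Submodule F V) :=
    Finite.of_injective (fun W : Submodule F V => (W : Set V)) SetLike.coe_injective
  haveI : Finite (Submodule F ↥H) :=
    Finite.of_injective (fun W : Submodule F ↥H => (W : Set ↥H)) SetLike.coe_injective
  have hab : a ≤ b := by rw [← ha, ← hb]; exact H.finrank_le
  set q := Fintype.card F with hq
  set e := a + c - b with he
  have hfib : ∀ G : {G : Submodule F V // finrank F ↥G = c ∧ G ⊔ H = ⊤},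
      G.1 ⊓ H ≤ H ∧ finrank F ↥(G.1 ⊓ H) = e := by
    intro G
    refine ⟨inf_le_right, ?_⟩
    have h2 := Submodule.finrank_sup_add_finrank_inf_eq G.1 H
    rw [G.2.2, finrank_top, hb, ha, G.2.1] at h2
    omega
  have step1 : Nat.card {G : Submodule F V // finrank F ↥G = c ∧ G ⊔ H = ⊤}
      = Nat.card {U : Submodule F V // U ≤ H ∧ finrank F ↥U = e} * q ^ ((b - a) * (b - c)) := by
    apply card_fiber_eq (f := fun G => ⟨G.1 ⊓ H, hfib G⟩)
    intro U
    have e1 : {x : {G : Submodule F V // finrank F ↥G = c ∧ G ⊔ H = ⊤} //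
        (⟨x.1 ⊓ H, hfib x⟩ : {U : Submodule F V // U ≤ H ∧ finrank F ↥U = e}) = U} ≃
        {G : Submodule F V // (finrank F ↥G = c ∧ G ⊔ H = ⊤) ∧ G ⊓ H = U.1} :=
      (Equiv.subtypeEquivRight (fun x => by rw [Subtype.ext_iff])).trans
        (Equiv.subtypeSubtypeEquivSubtypeInter _ _)
    have hcU : c + finrank F ↥H = finrank F V + finrank F ↥U.1 := by
      rw [ha, hb, U.2.2]; omega
    rw [Nat.card_congr (e1.trans (fiberEquiv H U.1 U.2.1 c hcU)), card_complement F]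
    have hw := finrank_map_mkQ (V := V) U.2.1
    have hqd := (U.1).finrank_quotient_add_finrank
    rw [ha, U.2.2] at hw
    rw [hb, U.2.2] at hqd
    congr 1
    have h1 : finrank F ↥(Submodule.map U.1.mkQ H) = b - c := by omega
    have h2 : finrank F (V ⧸ U.1) - finrank F ↥(Submodule.map U.1.mkQ H) = b - a := by omega
    rw [h2, h1]
  have step2 : Nat.card {U : Submodule F V // U ≤ H ∧ finrank F ↥U = e}
      * Pk q e e = Pk q a e := by
    have eA : {U : Submodule F V // U ≤ H ∧ finrank F ↥U = e} ≃
        {x : {U : Submodule F V // U ≤ H} // finrank F ↥x.1 = e} :=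
      (Equiv.subtypeSubtypeEquivSubtypeInter (fun U : Submodule F V => U ≤ H)
        (fun U => finrank F ↥U = e)).symm
    have eB : {U' : Submodule F ↥H // finrank F ↥(Submodule.map H.subtype U') = e} ≃
        {x : {U : Submodule F V // U ≤ H} // finrank F ↥x.1 = e} :=
      (Submodule.MapSubtype.orderIso H).toEquiv.subtypeEquiv (fun U' => Iff.rfl)
    have eC : {U' : Submodule F ↥H // finrank F ↥(Submodule.map H.subtype U') = e} ≃
        {U' : Submodule F ↥H // finrank F ↥U' = e} :=
      Equiv.subtypeEquivRight (fun U' => by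
        rw [(Submodule.equivMapOfInjective H.subtype H.injective_subtype U').symm.finrank_eq])
    have eY : {U : Submodule F V // U ≤ H ∧ finrank F ↥U = e} ≃
        {U' : Submodule F ↥H // finrank F ↥U' = e} := (eA.trans eB.symm).trans eC
    rw [Nat.card_congr eY]
    have := card_grass F (V := ↥H) e
    rwa [ha] at this
  rw [step1, mul_right_comm, step2, mul_comm]

end Main

section Rat

variable {q : ℕ}

lemma qPoch_pos (hq : 1 < q) (m : ℕ) : 0 < qPoch (q : ℚ) m := by
  apply Finset.prod_pos
  intro i _
  have h1 : ((q:ℚ))⁻¹ ^ (i+1) < 1 := by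
    apply pow_lt_one₀ (by positivity)
    · rw [inv_lt_one_iff₀]; right; exact_mod_cast hq
    · omega
  linarith

lemma qPoch_ne_zero (hq : 1 < q) (m : ℕ) : qPoch (q : ℚ) m ≠ 0 := ne_of_gt (qPoch_pos hq m)

lemma Pk_cast (hq : 1 < q) {n k : ℕ} (hk : k ≤ n) :
    ((Pk q n k : ℕ) : ℚ) = ∏ i ∈ Finset.range k, ((q:ℚ) ^ n - (q:ℚ) ^ i) := by
  rw [Pk, Nat.cast_prod]
  apply Finset.prod_congr rfl
  intro i hi
  have hi' : i ≤ n := by have := Finset.mem_range.mp hi; omega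
  have : q ^ i ≤ q ^ n := Nat.pow_le_pow_right (by omega) hi'
  push_cast [this]
  ring

lemma prodQ (hq : 1 < q) : ∀ k n, k ≤ n →
    (∏ i ∈ Finset.range k, ((q:ℚ) ^ n - (q:ℚ) ^ i)) * qPoch (q:ℚ) (n - k)
      = (q:ℚ) ^ (n * k) * qPoch (q:ℚ) n := by
  intro k
  induction k with
  | zero => intro n _; simp
  | succ k ih =>
      intro n hk
      have hk' : k ≤ n := by omega
      have hq0 : (q:ℚ) ≠ 0 := Nat.cast_ne_zero.mpr (by omega)
      have hpoch : qPoch (q:ℚ) (n - k) = qPoch (q:ℚ) (n - k - 1) * (1 - ((q:ℚ))⁻¹ ^ (n - k)) := by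
        have h1 : n - k = (n - k - 1) + 1 := by omega
        rw [h1, qPoch, Finset.prod_range_succ, ← qPoch, ← h1]
      have hfac : (q:ℚ) ^ n - (q:ℚ) ^ k = (q:ℚ) ^ n * (1 - ((q:ℚ))⁻¹ ^ (n - k)) := by
        have h2 : (q:ℚ) ^ n * ((q:ℚ))⁻¹ ^ (n - k) = (q:ℚ) ^ k := by
          rw [inv_pow, show n = k + (n - k) by omega, pow_add]
          field_simp
          rw [Nat.add_sub_cancel_left]
        rw [mul_sub, mul_one, h2, show n = k + (n-k) by omega]
      have hnk1 : n - k - 1 = n - (k + 1) := by omega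
      have := ih n hk'
      rw [Finset.prod_range_succ, ← hnk1, hfac]
      have h3 : (∏ i ∈ Finset.range k, ((q:ℚ) ^ n - (q:ℚ) ^ i)) *
          (qPoch (q:ℚ) (n - k - 1) * (1 - ((q:ℚ))⁻¹ ^ (n - k)))
          = (q:ℚ) ^ (n * k) * qPoch (q:ℚ) n := by rw [← hpoch]; exact this
      calc (∏ i ∈ Finset.range k, ((q:ℚ) ^ n - (q:ℚ) ^ i)) *
          ((q:ℚ) ^ n * (1 - ((q:ℚ))⁻¹ ^ (n - k))) * qPoch (q:ℚ) (n - k - 1)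
          = (∏ i ∈ Finset.range k, ((q:ℚ) ^ n - (q:ℚ) ^ i)) *
            (qPoch (q:ℚ) (n - k - 1) * (1 - ((q:ℚ))⁻¹ ^ (n - k))) * (q:ℚ) ^ n := by ring
        _ = (q:ℚ) ^ (n * k) * qPoch (q:ℚ) n * (q:ℚ) ^ n := by rw [h3]
        _ = (q:ℚ) ^ (n * (k+1)) * qPoch (q:ℚ) n := by rw [mul_add, pow_add, mul_one]; ring

lemma expId (a b c : ℕ) (h1 : b ≤ a + c) (h2 : c ≤ b) (h3 : a ≤ b) :
    a * (a + c - b) + (b - a) * (b - c) = (a + c - b) * (a + c - b) + (b - c) * c := by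
  zify [h1, h2, h3]
  ring

end Rat

end Statement7Aux

open Statement7Aux in
/-- The number of subspaces `G` of `K` with `dim G = c` and `G + H = K` equals
`q^{(b-c)c} (q⁻¹)_a / ((q⁻¹)_{b-c} (q⁻¹)_{a+c-b})`. -/
theorem statement7 {F : Type*} [Field F] [Fintype F]
    (K : Type*) [AddCommGroup K] [Module F K] [FiniteDimensional F K]
    (H : Submodule F K) (a b c : ℕ)
    (hb : Module.finrank F K = b) (ha : Module.finrank F H = a)
    (hc1 : b - a ≤ c) (hc2 : c ≤ b) :
    (Nat.card {G : Submodule F K // Module.finrank F G = c ∧ G ⊔ H = ⊤} : ℚ) =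
      (Fintype.card F : ℚ) ^ ((b - c) * c) * qPoch (Fintype.card F) a /
        (qPoch (Fintype.card F) (b - c) * qPoch (Fintype.card F) (a + c - b)) := by
  have hq : 1 < Fintype.card F := Fintype.one_lt_card
  set q := Fintype.card F with hqdef
  have hab : a ≤ b := by rw [← ha, ← hb]; exact H.finrank_le
  have hbac : b ≤ a + c := by omega
  set e := a + c - b with he
  have hea : e ≤ a := by omega
  have hae : a - e = b - c := by omega
  have hq0 : (q:ℚ) ≠ 0 := Nat.cast_ne_zero.mpr (by omega)
  have key := main_count H a b c hb ha hc1 hc2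
  set N := Nat.card {G : Submodule F K // Module.finrank F G = c ∧ G ⊔ H = ⊤} with hN
  have keyQ : (N : ℚ) * ((Pk q e e : ℕ) : ℚ)
      = ((Pk q a e : ℕ) : ℚ) * (q:ℚ) ^ ((b - a) * (b - c)) := by
    exact_mod_cast congrArg (fun x : ℕ => (x : ℚ)) key
  have hA : ((Pk q e e : ℕ) : ℚ) = (q:ℚ) ^ (e * e) * qPoch (q:ℚ) e := by
    have h := prodQ hq e e le_rfl
    rw [Nat.sub_self] at h
    rw [Pk_cast hq le_rfl]
    simpa [qPoch] using h
  have hB : ((Pk q a e : ℕ) : ℚ) * qPoch (q:ℚ) (a - e) = (q:ℚ) ^ (a * e) * qPoch (q:ℚ) a := by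
    rw [Pk_cast hq hea]; exact prodQ hq e a hea
  rw [eq_div_iff (mul_ne_zero (qPoch_ne_zero hq (b - c)) (qPoch_ne_zero hq e))]
  apply mul_left_cancel₀ (pow_ne_zero (e * e) hq0)
  calc (q:ℚ) ^ (e*e) * ((N:ℚ) * (qPoch (q:ℚ) (b-c) * qPoch (q:ℚ) e))
      = ((N:ℚ) * ((q:ℚ) ^ (e*e) * qPoch (q:ℚ) e)) * qPoch (q:ℚ) (b-c) := by ring
    _ = ((N:ℚ) * ((Pk q e e : ℕ) : ℚ)) * qPoch (q:ℚ) (b-c) := by rw [hA]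
    _ = (((Pk q a e : ℕ) : ℚ) * (q:ℚ) ^ ((b-a)*(b-c))) * qPoch (q:ℚ) (b-c) := by rw [keyQ]
    _ = (((Pk q a e : ℕ) : ℚ) * qPoch (q:ℚ) (a-e)) * (q:ℚ) ^ ((b-a)*(b-c)) := by
        rw [hae]; ring
    _ = ((q:ℚ) ^ (a*e) * qPoch (q:ℚ) a) * (q:ℚ) ^ ((b-a)*(b-c)) := by rw [hB]
    _ = (q:ℚ) ^ (a*e + (b-a)*(b-c)) * qPoch (q:ℚ) a := by rw [pow_add]; ring
    _ = (q:ℚ) ^ (e*e + (b-c)*c) * qPoch (q:ℚ) a := by rw [expId a b c hbac hc2 hab]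
    _ = (q:ℚ) ^ (e*e) * ((q:ℚ) ^ ((b-c)*c) * qPoch (q:ℚ) a) := by rw [pow_add]; ring
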